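/- Let A be a Banach algebra and I a closed two-sided ideal of A that is Arens regular and has a bounded approximate identity (e_α). Then (e_α) is quasi-central in A: for every a ∈ A, a e_α − e_α a → 0 weakly (any weak* cluster point E of (e_α) in I** is the identity of I** and satisfies aE = Ea for all a ∈ A). -/

import Mathlib

open ContinuousLinearMap Filter Topology

namespace Paper

structure Bimod (A : Type*) [NormedRing A] [NormedAlgebra ℂ A]
    (X : Type*) [NormedAddCommGroup X] [NormedSpace ℂ X] where
  l : A → X →L[ℂ] X
  r : A → X →L[ℂ] X
  l_mul : ∀ a b x, l (a * b) x = l a (l b x)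
  r_mul : ∀ a b x, r (a * b) x = r b (r a x)
  lr : ∀ a b x, l a (r b x) = r b (l a x)

variable {A : Type*} [NormedRing A] [NormedAlgebra ℂ A]
variable {X : Type*} [NormedAddCommGroup X] [NormedSpace ℂ X]

noncomputable def Bimod.dual (M : Bimod A X) : Bimod A (X →L[ℂ] ℂ) where
  l a := (compL ℂ X X ℂ).flip (M.r a)
  r a := (compL ℂ X X ℂ).flip (M.l a)
  l_mul a b f := by ext x; simp [M.r_mul]
  r_mul a b f := by ext x; simp [M.l_mul]
  lr a b f := by ext x; simp [M.lr]

def IsDerivation (M : Bimod A X) (D : A →L[ℂ] X) : Prop :=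
  ∀ a b, D (a * b) = M.l a (D b) + M.r b (D a)

def IsInner (M : Bimod A X) (D : A →L[ℂ] X) : Prop :=
  ∃ x, ∀ a, D a = M.l a x - M.r a x

noncomputable def Bimod.restrict (M : Bimod A X) (Y : Submodule ℂ X)
    (hl : ∀ a, ∀ y ∈ Y, M.l a y ∈ Y) (hr : ∀ a, ∀ y ∈ Y, M.r a y ∈ Y) :
    Bimod A Y where
  l a := ((M.l a).comp Y.subtypeL).codRestrict Y fun y => hl a y y.2
  r a := ((M.r a).comp Y.subtypeL).codRestrict Y fun y => hr a y y.2
  l_mul a b y := Subtype.ext (M.l_mul a b y)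
  r_mul a b y := Subtype.ext (M.r_mul a b y)
  lr a b y := Subtype.ext (M.lr a b y)

noncomputable def algBimod (A : Type*) [NormedRing A] [NormedAlgebra ℂ A] : Bimod A A where
  l a := ContinuousLinearMap.mul ℂ A a
  r a := (ContinuousLinearMap.mul ℂ A).flip a
  l_mul a b x := mul_assoc a b x
  r_mul a b x := (mul_assoc x a b).symm
  lr a b x := (mul_assoc a x b).symm

noncomputable def idealBimod (I : Submodule ℂ A)
    (hL : ∀ a, ∀ x ∈ I, a * x ∈ I) (hR : ∀ a, ∀ x ∈ I, x * a ∈ I) :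
    Bimod A I where
  l a := ((ContinuousLinearMap.mul ℂ A a).comp I.subtypeL).codRestrict I fun x => hL a x x.2
  r a := (((ContinuousLinearMap.mul ℂ A).flip a).comp I.subtypeL).codRestrict I fun x => hR a x x.2
  l_mul a b x := Subtype.ext (mul_assoc a b (x : A))
  r_mul a b x := Subtype.ext (mul_assoc (x : A) a b).symm
  lr a b x := Subtype.ext (mul_assoc a (x : A) b).symm

/-- For $f ∈ I^*$ and $x ∈ I$, the map $x ↦ f·x$ where $(f·x)(y) = f(xy)$. -/
noncomputable def lmap (I : Submodule ℂ A)
    (hL : ∀ a : A, ∀ x ∈ I, a * x ∈ I) (hR : ∀ a : A, ∀ x ∈ I, x * a ∈ I)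
    (f : ↥I →L[ℂ] ℂ) : ↥I →L[ℂ] (↥I →L[ℂ] ℂ) :=
  LinearMap.mkContinuous
    { toFun := fun (x : ↥I) => f.comp ((idealBimod I hL hR).l (x : A))
      map_add' := fun x y => by
        ext z
        show f ((idealBimod I hL hR).l ((x : A) + (y : A)) z) =
          f ((idealBimod I hL hR).l (x : A) z) + f ((idealBimod I hL hR).l (y : A) z)
        rw [← map_add]
        congr 1
        exact Subtype.ext (add_mul (x : A) (y : A) (z : A))
      map_smul' := fun (c : ℂ) (x : ↥I) => by
        ext z
        show f ((idealBimod I hL hR).l ((c • x : ↥I) : A) z) =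
          c • f ((idealBimod I hL hR).l (x : A) z)
        rw [← map_smul]
        congr 1
        exact Subtype.ext (smul_mul_assoc c (x : A) (z : A)) }
    ‖f‖ (fun x => by
      refine (ContinuousLinearMap.opNorm_comp_le _ _).trans ?_
      have hx : ‖(idealBimod I hL hR).l (x : A)‖ ≤ ‖x‖ := by
        refine ContinuousLinearMap.opNorm_le_bound _ (norm_nonneg x) fun z => ?_
        calc ‖(idealBimod I hL hR).l (x : A) z‖ = ‖(x : A) * (z : A)‖ := rfl
          _ ≤ ‖(x : A)‖ * ‖(z : A)‖ := norm_mul_le _ _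
          _ = ‖x‖ * ‖z‖ := rfl
      exact mul_le_mul_of_nonneg_left hx (norm_nonneg f))

/-- For $f ∈ I^*$ and $x ∈ I$, the map $x ↦ x·f$ where $(x·f)(y) = f(yx)$. -/
noncomputable def rmap (I : Submodule ℂ A)
    (hL : ∀ a : A, ∀ x ∈ I, a * x ∈ I) (hR : ∀ a : A, ∀ x ∈ I, x * a ∈ I)
    (f : ↥I →L[ℂ] ℂ) : ↥I →L[ℂ] (↥I →L[ℂ] ℂ) :=
  LinearMap.mkContinuous
    { toFun := fun (x : ↥I) => f.comp ((idealBimod I hL hR).r (x : A))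
      map_add' := fun x y => by
        ext z
        show f ((idealBimod I hL hR).r ((x : A) + (y : A)) z) =
          f ((idealBimod I hL hR).r (x : A) z) + f ((idealBimod I hL hR).r (y : A) z)
        rw [← map_add]
        congr 1
        exact Subtype.ext (mul_add (z : A) (x : A) (y : A))
      map_smul' := fun (c : ℂ) (x : ↥I) => by
        ext z
        show f ((idealBimod I hL hR).r ((c • x : ↥I) : A) z) =
          c • f ((idealBimod I hL hR).r (x : A) z)
        rw [← map_smul]
        congr 1
        exact Subtype.ext (mul_smul_comm c (z : A) (x : A)) }
    ‖f‖ (fun x => by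
      refine (ContinuousLinearMap.opNorm_comp_le _ _).trans ?_
      have hx : ‖(idealBimod I hL hR).r (x : A)‖ ≤ ‖x‖ := by
        refine ContinuousLinearMap.opNorm_le_bound _ (norm_nonneg x) fun z => ?_
        calc ‖(idealBimod I hL hR).r (x : A) z‖ = ‖(z : A) * (x : A)‖ := rfl
          _ ≤ ‖(z : A)‖ * ‖(x : A)‖ := norm_mul_le _ _
          _ = ‖x‖ * ‖z‖ := mul_comm _ _
      exact mul_le_mul_of_nonneg_left hx (norm_nonneg f))

/-- The first Arens product of $F, G ∈ I^{**}$, evaluated at $f ∈ I^*$: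
$(F□G)(f) = F(G·f)$ where $(G·f)(x) = G(f·x)$ and $(f·x)(y) = f(xy)$. -/
noncomputable def firstArens (I : Submodule ℂ A)
    (hL : ∀ a : A, ∀ x ∈ I, a * x ∈ I) (hR : ∀ a : A, ∀ x ∈ I, x * a ∈ I)
    (F G : (↥I →L[ℂ] ℂ) →L[ℂ] ℂ) (f : ↥I →L[ℂ] ℂ) : ℂ :=
  F (G.comp (lmap I hL hR f))

/-- The second Arens product of $F, G ∈ I^{**}$, evaluated at $f ∈ I^*$:
$(F◇G)(f) = G(F·f)$ where $(F·f)(x) = F(x·f)$ and $(x·f)(y) = f(yx)$. -/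
noncomputable def secondArens (I : Submodule ℂ A)
    (hL : ∀ a : A, ∀ x ∈ I, a * x ∈ I) (hR : ∀ a : A, ∀ x ∈ I, x * a ∈ I)
    (F G : (↥I →L[ℂ] ℂ) →L[ℂ] ℂ) (f : ↥I →L[ℂ] ℂ) : ℂ :=
  G (F.comp (rmap I hL hR f))

set_option maxHeartbeats 1000000 in
theorem stmt_7
    {A : Type*} [NormedRing A] [NormedAlgebra ℂ A] [CompleteSpace A]
    (I : Submodule ℂ A) (hIc : IsClosed (I : Set A))
    (hL : ∀ a : A, ∀ x ∈ I, a * x ∈ I) (hR : ∀ a : A, ∀ x ∈ I, x * a ∈ I)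
    (harens : ∀ (F G : (↥I →L[ℂ] ℂ) →L[ℂ] ℂ) (f : ↥I →L[ℂ] ℂ),
        firstArens I hL hR F G f = secondArens I hL hR F G f)
    (ι : Type*) (p : Filter ι) [p.NeBot] (e : ι → ↥I)
    (hb : ∃ C : ℝ, ∀ i, ‖e i‖ ≤ C)
    (hai : ∀ x : ↥I, Tendsto (fun i => (e i : A) * (x : A)) p (𝓝 (x : A)) ∧
                     Tendsto (fun i => (x : A) * (e i : A)) p (𝓝 (x : A))) :
    (∀ (a : A) (f : ↥I →L[ℂ] ℂ),
        Tendsto (fun i => f ⟨a * (e i : A) - (e i : A) * a,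
          I.sub_mem (hL a _ (e i).2) (hR a _ (e i).2)⟩) p (𝓝 0)) ∧
    (∀ E : (↥I →L[ℂ] ℂ) →L[ℂ] ℂ,
        (∃ q : Filter ι, q ≤ p ∧ q.NeBot ∧
            ∀ f : ↥I →L[ℂ] ℂ, Tendsto (fun i => f (e i)) q (𝓝 (E f))) →
        (∀ (F : (↥I →L[ℂ] ℂ) →L[ℂ] ℂ) (f : ↥I →L[ℂ] ℂ),
            firstArens I hL hR E F f = F f ∧ firstArens I hL hR F E f = F f) ∧
        (∀ a : A, ((idealBimod I hL hR).dual.dual).l a E =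
                  ((idealBimod I hL hR).dual.dual).r a E)) := by
  classical
  obtain ⟨C, hC⟩ := hb
  set M := idealBimod I hL hR with hM
  -- The second part first.
  have key : ∀ E : (↥I →L[ℂ] ℂ) →L[ℂ] ℂ,
      (∃ q : Filter ι, q ≤ p ∧ q.NeBot ∧
          ∀ f : ↥I →L[ℂ] ℂ, Tendsto (fun i => f (e i)) q (𝓝 (E f))) →
      (∀ (F : (↥I →L[ℂ] ℂ) →L[ℂ] ℂ) (f : ↥I →L[ℂ] ℂ),
          firstArens I hL hR E F f = F f ∧ firstArens I hL hR F E f = F f) ∧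
      (∀ a : A, (M.dual.dual).l a E = (M.dual.dual).r a E) := by
    rintro E ⟨q, hqp, hq, hlim⟩
    haveI := hq
    have hcontl : ∀ (f : ↥I →L[ℂ] ℂ) (x : ↥I),
        Tendsto (fun i => f (M.l (x : A) (e i))) q (𝓝 (f x)) := by
      intro f x
      refine (f.continuous.tendsto x).comp ?_
      rw [tendsto_subtype_rng]
      exact ((hai x).2).mono_left hqp
    have hcontr : ∀ (f : ↥I →L[ℂ] ℂ) (x : ↥I),
        Tendsto (fun i => f (M.r (x : A) (e i))) q (𝓝 (f x)) := by
      intro f x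
      refine (f.continuous.tendsto x).comp ?_
      rw [tendsto_subtype_rng]
      exact ((hai x).1).mono_left hqp
    have hE_l : ∀ (f : ↥I →L[ℂ] ℂ) (x : ↥I), E (f.comp (M.l (x : A))) = f x := fun f x =>
      tendsto_nhds_unique (hlim (f.comp (M.l (x : A)))) (hcontl f x)
    have hE_r : ∀ (f : ↥I →L[ℂ] ℂ) (x : ↥I), E (f.comp (M.r (x : A))) = f x := fun f x =>
      tendsto_nhds_unique (hlim (f.comp (M.r (x : A)))) (hcontr f x)
    have hRid : ∀ (F : (↥I →L[ℂ] ℂ) →L[ℂ] ℂ) (f : ↥I →L[ℂ] ℂ),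
        firstArens I hL hR F E f = F f := by
      intro F f
      unfold firstArens
      congr 1
      ext x
      exact hE_l f x
    have hLid : ∀ (F : (↥I →L[ℂ] ℂ) →L[ℂ] ℂ) (f : ↥I →L[ℂ] ℂ),
        firstArens I hL hR E F f = F f := by
      intro F f
      rw [harens]
      unfold secondArens
      congr 1
      ext x
      exact hE_r f x
    have hassoc : ∀ (F G : (↥I →L[ℂ] ℂ) →L[ℂ] ℂ) (a : A) (f : ↥I →L[ℂ] ℂ),
        firstArens I hL hR F ((M.dual.dual).l a G) f
          = firstArens I hL hR ((M.dual.dual).r a F) G f := by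
      intro F G a f
      show F (((M.dual.dual).l a G).comp (lmap I hL hR f))
        = F ((G.comp (lmap I hL hR f)).comp (M.r a))
      congr 1
      ext x
      show G ((lmap I hL hR f x).comp (M.l a)) = G (lmap I hL hR f (M.r a x))
      congr 1
      ext y
      show f (M.l (x : A) (M.l a y)) = f (M.l ((M.r a x : A)) y)
      congr 1
      exact Subtype.ext (mul_assoc (x : A) a (y : A)).symm
    refine ⟨fun F f => ⟨hLid F f, hRid F f⟩, fun a => ?_⟩
    ext f
    calc ((M.dual.dual).l a E) f
        = firstArens I hL hR E ((M.dual.dual).l a E) f := (hLid _ f).symm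
      _ = firstArens I hL hR ((M.dual.dual).r a E) E f := hassoc E E a f
      _ = ((M.dual.dual).r a E) f := hRid _ f
  refine ⟨?_, key⟩
  intro a f
  by_contra hcon
  rw [Metric.tendsto_nhds] at hcon
  push_neg at hcon
  obtain ⟨ε, hε, hfreq⟩ := hcon
  have hfreq' : ∃ᶠ i in p, ¬ dist (f ⟨a * (e i : A) - (e i : A) * a,
      I.sub_mem (hL a _ (e i).2) (hR a _ (e i).2)⟩) 0 < ε := by
    exact hfreq.mono fun i hi => not_lt.mpr hi
  have hne : (p ⊓ 𝓟 {i | ¬ dist (f ⟨a * (e i : A) - (e i : A) * a,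
      I.sub_mem (hL a _ (e i).2) (hR a _ (e i).2)⟩) 0 < ε}).NeBot :=
    Filter.frequently_iff_neBot.mp hfreq'
  set t := {i | ¬ dist (f ⟨a * (e i : A) - (e i : A) * a,
      I.sub_mem (hL a _ (e i).2) (hR a _ (e i).2)⟩) 0 < ε} with ht
  let u : Ultrafilter ι := Ultrafilter.of (p ⊓ 𝓟 t)
  have hup : (u : Filter ι) ≤ p := (Ultrafilter.of_le _).trans inf_le_left
  have hut : t ∈ (u : Filter ι) :=
    Filter.le_principal_iff.mp ((Ultrafilter.of_le _).trans inf_le_right)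
  have hex : ∀ g : ↥I →L[ℂ] ℂ, ∃ z : ℂ, Tendsto (fun i => g (e i)) ↑u (𝓝 z) := by
    intro g
    have hmem : ∀ i, g (e i) ∈ Metric.closedBall (0 : ℂ) (‖g‖ * C) := by
      intro i
      rw [Metric.mem_closedBall, dist_zero_right]
      exact (g.le_opNorm _).trans (mul_le_mul_of_nonneg_left (hC i) (norm_nonneg g))
    obtain ⟨z, _, hz⟩ := (isCompact_closedBall (0 : ℂ) (‖g‖ * C)).ultrafilter_le_nhds
      (u.map (fun i => g (e i)))
      (by
        refine Filter.le_principal_iff.mpr ?_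
        rw [Ultrafilter.mem_coe, Ultrafilter.mem_map]
        exact Filter.univ_mem' hmem)
    exact ⟨z, hz⟩
  choose φ hφ using hex
  have hadd : ∀ g h : ↥I →L[ℂ] ℂ, φ (g + h) = φ g + φ h := by
    intro g h
    refine tendsto_nhds_unique (hφ (g + h)) ?_
    simpa using (hφ g).add (hφ h)
  have hsmul : ∀ (c : ℂ) (g : ↥I →L[ℂ] ℂ), φ (c • g) = c • φ g := by
    intro c g
    refine tendsto_nhds_unique (hφ (c • g)) ?_
    simpa using (hφ g).const_smul c
  have hbdd : ∀ g : ↥I →L[ℂ] ℂ, ‖φ g‖ ≤ C * ‖g‖ := by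
    intro g
    refine le_of_tendsto (hφ g).norm (Filter.Eventually.of_forall fun i => ?_)
    calc ‖g (e i)‖ ≤ ‖g‖ * ‖e i‖ := g.le_opNorm _
      _ ≤ ‖g‖ * C := mul_le_mul_of_nonneg_left (hC i) (norm_nonneg g)
      _ = C * ‖g‖ := mul_comm _ _
  let E : (↥I →L[ℂ] ℂ) →L[ℂ] ℂ := LinearMap.mkContinuous
    { toFun := φ, map_add' := hadd, map_smul' := hsmul } C hbdd
  have hElim : ∀ g : ↥I →L[ℂ] ℂ, Tendsto (fun i => g (e i)) ↑u (𝓝 (E g)) := hφ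
  obtain ⟨_, hcentral⟩ := key E ⟨↑u, hup, u.neBot, hElim⟩
  have h1 : E (f.comp (M.l a)) = E (f.comp (M.r a)) :=
    DFunLike.congr_fun (hcentral a) f
  have hv : Tendsto (fun i => f ⟨a * (e i : A) - (e i : A) * a,
      I.sub_mem (hL a _ (e i).2) (hR a _ (e i).2)⟩) ↑u (𝓝 0) := by
    have h2 := (hφ (f.comp (M.l a))).sub (hφ (f.comp (M.r a)))
    have h3 : φ (f.comp (M.l a)) - φ (f.comp (M.r a)) = 0 := by
      have : φ (f.comp (M.l a)) = φ (f.comp (M.r a)) := h1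
      rw [this, sub_self]
    rw [h3] at h2
    convert h2 using 2 with i
    have hsplit : (⟨a * (e i : A) - (e i : A) * a,
        I.sub_mem (hL a _ (e i).2) (hR a _ (e i).2)⟩ : ↥I)
        = M.l a (e i) - M.r a (e i) := Subtype.ext rfl
    rw [hsplit, map_sub]
    rfl
  have hev : ∀ᶠ i in ↑u, dist (f ⟨a * (e i : A) - (e i : A) * a,
      I.sub_mem (hL a _ (e i).2) (hR a _ (e i).2)⟩) 0 < ε :=
    (Metric.tendsto_nhds.mp hv) ε hε
  obtain ⟨i, hi1, hi2⟩ := (hev.and (Filter.eventually_of_mem hut fun i hi => hi)).exists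
  exact hi2 hi1

end Paper
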